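/- Let y(z,w) ∈ ℚ[[z,w]] be the unique power series with y(0,w)=0 satisfying y = z·w(1+y)^3/(1−wy). Then for n ≥ 1 and n ≤ k ≤ 2n-1, the coefficient of z^n w^k in log(1+y) equals (1/n) * binom(3n-1, n+k) * binom(k-1, n-1). -/

import Mathlib

open PowerSeries Finset

section Stmt18Aux

variable {K : Type*} [Field K] [CharZero K]

lemma dF_def (f : PowerSeries K) : (d⁄dX K) f = derivativeFun f := rfl

omit [CharZero K] in
lemma dF_X_mul (V : PowerSeries K) :
    derivativeFun (X * V) = V + X * derivativeFun V := by
  rw [derivativeFun_mul]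
  have h1 : derivativeFun (X : PowerSeries K) = 1 := derivative_X
  rw [h1]
  simp only [smul_eq_mul, mul_one]
  ring

lemma res_zero (V : PowerSeries K) (hV : constantCoeff (R := K) V ≠ 0) (i : ℕ) (h2 : 2 ≤ i) :
    coeff (R := K) (i-1) (derivativeFun (X*V) * (V⁻¹)^i) = 0 := by
  have hVi : V * V⁻¹ = 1 := PowerSeries.mul_inv_cancel _ hV
  have hsplit : derivativeFun (X*V) * (V⁻¹)^i
      = (V⁻¹)^(i-1) + X * (derivativeFun V * (V⁻¹)^i) := by
    rw [dF_X_mul]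
    have h4 : V * (V⁻¹)^i = (V⁻¹)^(i-1) := by
      have h5 : (V⁻¹)^i = V⁻¹ * (V⁻¹)^(i-1) := by
        rw [← pow_succ']
        congr 1
        omega
      rw [h5, ← mul_assoc, hVi, one_mul]
    rw [add_mul, h4]
    ring
  have hder : ((i-1 : ℕ) : PowerSeries K) * (derivativeFun V * (V⁻¹)^i)
      = -((d⁄dX K) ((V⁻¹)^(i-1))) := by
    rw [Derivation.leibniz_pow, derivative_inv']
    simp only [smul_eq_mul, nsmul_eq_mul, dF_def]
    have hpow : (V⁻¹)^(i-1-1) * (V⁻¹)^2 = (V⁻¹)^i := by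
      rw [← pow_add]; congr 1; omega
    calc ((i-1 : ℕ) : PowerSeries K) * (derivativeFun V * (V⁻¹)^i)
        = ((i-1 : ℕ) : PowerSeries K) *
            (derivativeFun V * ((V⁻¹)^(i-1-1) * (V⁻¹)^2)) := by rw [hpow]
      _ = -(((i-1:ℕ) : PowerSeries K) * ((V⁻¹)^(i-1-1) * (-(V⁻¹)^2 * derivativeFun V))) := by
            ring
  have e1 := congrArg (coeff (R := K) (i-2)) hder
  rw [map_neg, coeff_derivative] at e1
  rw [← Nat.cast_add_one, show i - 2 + 1 = i - 1 from by omega] at e1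
  rw [show ((i-1:ℕ) : PowerSeries K) = C (R := K) ((i-1 : ℕ) : K) from (map_natCast (C (R := K)) _).symm,
    coeff_C_mul] at e1
  have hc : ((i-1 : ℕ) : K) ≠ 0 := Nat.cast_ne_zero.mpr (by omega)
  have e2 : coeff (R := K) (i-2) (derivativeFun V * (V⁻¹)^i)
      = -(coeff (R := K) (i-1) ((V⁻¹)^(i-1))) := by
    have e3 : ((i-1:ℕ):K) * coeff (R := K) (i-2) (derivativeFun V * (V⁻¹)^i)
        = ((i-1:ℕ):K) * -(coeff (R := K) (i-1) ((V⁻¹)^(i-1))) := by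
      rw [e1]; ring
    exact mul_left_cancel₀ hc e3
  rw [hsplit, map_add]
  have hx : coeff (R := K) (i-1) (X * (derivativeFun V * (V⁻¹)^i))
      = coeff (R := K) (i-2) (derivativeFun V * (V⁻¹)^i) := by
    rw [show i - 1 = (i-2) + 1 from by omega, coeff_succ_X_mul]
  rw [hx, e2]
  ring

lemma res_aux (V : PowerSeries K) (hV : constantCoeff (R := K) V ≠ 0) (n s : ℕ) (hn : 1 ≤ n) :
    coeff (R := K) (n-1) ((X*V)^s * derivativeFun (X*V) * (V⁻¹)^n)
      = if s = n-1 then 1 else 0 := by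
  have hVi : V * V⁻¹ = 1 := PowerSeries.mul_inv_cancel _ hV
  have key : ∀ s i : ℕ, (X*V)^s * derivativeFun (X*V) * (V⁻¹)^(s+i)
      = X^s * (derivativeFun (X*V) * (V⁻¹)^i) := by
    intro s i
    rw [mul_pow, pow_add]
    calc X^s * V^s * derivativeFun (X*V) * ((V⁻¹)^s * (V⁻¹)^i)
        = (V*V⁻¹)^s * (X^s * (derivativeFun (X*V) * (V⁻¹)^i)) := by rw [mul_pow]; ring
      _ = X^s * (derivativeFun (X*V) * (V⁻¹)^i) := by rw [hVi, one_pow, one_mul]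
  rcases lt_trichotomy s (n-1) with hs | hs | hs
  · rw [if_neg (by omega)]
    have hn' : n = s + (n - s) := by omega
    rw [hn', key s (n - s)]
    rw [show s + (n-s) - 1 = (n - s - 1) + s from by omega, coeff_X_pow_mul]
    exact res_zero V hV (n - s) (by omega)
  · rw [if_pos hs]
    subst hs
    have h1 := key (n-1) 1
    rw [show n - 1 + 1 = n from by omega] at h1
    rw [h1]
    rw [coeff_X_pow_mul', if_pos le_rfl, Nat.sub_self]
    rw [pow_one, dF_X_mul, add_mul]
    rw [hVi]
    simp [coeff_zero_eq_constantCoeff, map_mul, constantCoeff_X]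
  · rw [if_neg (by omega)]
    obtain ⟨t, rfl⟩ : ∃ t, s = n + t := ⟨s - n, by omega⟩
    have h1 : (X*V)^(n+t) * derivativeFun (X*V) * (V⁻¹)^n
        = X^n * ((X*V)^t * (V*V⁻¹)^n * derivativeFun (X*V)) := by
      rw [pow_add, mul_pow, mul_pow]
      ring
    rw [h1]
    rw [coeff_X_pow_mul']
    rw [if_neg (by omega)]

lemma poly_aux (n : ℕ) (hn : 1 ≤ n) :
    ∃ g : Polynomial ℤ, (1 - Polynomial.X)^n *
      (∑ j ∈ range n, (Nat.choose (n-1+j) j : Polynomial ℤ) * Polynomial.X^j)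
      = 1 + Polynomial.X^n * g := by
  set S : Polynomial ℤ := ∑ j ∈ range n, (Nat.choose (n-1+j) j : Polynomial ℤ) * Polynomial.X^j
    with hS
  suffices h : (Polynomial.X : Polynomial ℤ)^n ∣ ((1 - Polynomial.X)^n * S - 1) by
    obtain ⟨g, hg⟩ := h
    exact ⟨g, by linear_combination hg⟩
  rw [Polynomial.X_pow_dvd_iff]
  intro d hd
  have hcoe : ∀ d : ℕ, ((1 - Polynomial.X)^n * S - 1).coeff d
      = coeff (R := ℤ) d (((1 - Polynomial.X)^n * S - 1 : Polynomial ℤ) : PowerSeries ℤ) := by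
    intro d
    rw [Polynomial.coeff_coe]
  rw [hcoe]
  have hSum : ((S : Polynomial ℤ) : PowerSeries ℤ)
      = ∑ j ∈ range n, (Nat.choose (n-1+j) j : PowerSeries ℤ) * X^j := by
    rw [hS, ← Polynomial.coeToPowerSeries.ringHom_apply, map_sum]
    refine sum_congr rfl fun j _ => ?_
    rw [map_mul, map_pow, map_natCast]
    simp [Polynomial.coeToPowerSeries.ringHom_apply, Polynomial.coe_X]
  have hcast : (((1 - Polynomial.X)^n * S - 1 : Polynomial ℤ) : PowerSeries ℤ)
      = (1 - X)^n * (∑ j ∈ range n, (Nat.choose (n-1+j) j : PowerSeries ℤ) * X^j) - 1 := by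
    push_cast
    rw [hSum]
  rw [hcast]
  set Inv : PowerSeries ℤ := (invOneSubPow ℤ n).val with hInv
  have hmul : ((1 - X : PowerSeries ℤ))^n * Inv = 1 := by
    have := (invOneSubPow ℤ n).inv_val
    rwa [invOneSubPow_inv_eq_one_sub_pow] at this
  have hdvd : (X : PowerSeries ℤ)^n ∣
      ((∑ j ∈ range n, (Nat.choose (n-1+j) j : PowerSeries ℤ) * X^j) - Inv) := by
    rw [X_pow_dvd_iff]
    intro m hm
    rw [map_sub]
    have h1 : coeff (R := ℤ) m (∑ j ∈ range n, (Nat.choose (n-1+j) j : PowerSeries ℤ) * X^j)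
        = (Nat.choose (n-1+m) m : ℤ) := by
      rw [map_sum]
      have : ∀ j ∈ range n, coeff (R := ℤ) m ((Nat.choose (n-1+j) j : PowerSeries ℤ) * X^j)
          = if m = j then (Nat.choose (n-1+j) j : ℤ) else 0 := by
        intro j _
        rw [show ((Nat.choose (n-1+j) j : ℕ) : PowerSeries ℤ) = C (R := ℤ) ((Nat.choose (n-1+j) j : ℕ) : ℤ)
          from (map_natCast (C (R := ℤ)) _).symm, coeff_C_mul, coeff_X_pow]
        split_ifs <;> simp
      rw [sum_congr rfl this, sum_ite_eq (range n) m _, if_pos (mem_range.mpr hm)]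
    have h2 : coeff (R := ℤ) m Inv = (Nat.choose (n-1+m) (n-1) : ℤ) := by
      rw [hInv, invOneSubPow_val_eq_mk_sub_one_add_choose_of_pos ℤ n (by omega), coeff_mk]
    rw [h1, h2, Nat.choose_symm_add.symm]
    · simp [Nat.choose_symm_add]
  obtain ⟨E, hE⟩ := hdvd
  have : (1 - X : PowerSeries ℤ)^n * (∑ j ∈ range n, (Nat.choose (n-1+j) j : PowerSeries ℤ) * X^j) - 1
      = X^n * ((1-X)^n * E) := by
    calc (1 - X : PowerSeries ℤ)^n * (∑ j ∈ range n, (Nat.choose (n-1+j) j : PowerSeries ℤ) * X^j) - 1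
        = (1-X)^n * ((∑ j ∈ range n, (Nat.choose (n-1+j) j : PowerSeries ℤ) * X^j) - Inv)
          + ((1-X)^n * Inv - 1) := by ring
      _ = X^n * ((1-X)^n * E) := by rw [hE, hmul]; ring
  rw [this, coeff_X_pow_mul', if_neg (by omega)]

end Stmt18Aux

/-- The series `w`, viewed as a constant (in `z`) power series in `ℚ[[w]][[z]]`. -/
noncomputable def Wvar : PowerSeries (PowerSeries ℚ) := C (R := (PowerSeries ℚ)) X

set_option maxHeartbeats 2000000 in
/-- Let `y ∈ ℚ[[z,w]]` be the series with zero constant term satisfying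
`y = z·w(1+y)³/(1-wy)` (stated multiplied out), and let `L = log(1+y)` be the
formal logarithm, characterized by `L(0) = 0` and `(1+y)·L' = y'` (derivative in
`z`). Then for `n ≥ 1` and `n ≤ k ≤ 2n-1`, the coefficient of `zⁿwᵏ` in `L`
equals `(1/n)·C(3n-1, n+k)·C(k-1, n-1)`. -/
theorem stmt18 (y L : PowerSeries (PowerSeries ℚ))
    (h0 : constantCoeff (R := (PowerSeries ℚ)) y = 0)
    (hy : y * (1 - Wvar * y) = X * Wvar * (1 + y) ^ 3)
    (hL0 : constantCoeff (R := (PowerSeries ℚ)) L = 0)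
    (hL : (1 + y) * derivativeFun L = derivativeFun y)
    (n k : ℕ) (hn : 1 ≤ n) (hnk : n ≤ k) (hk : (k : ℤ) ≤ 2 * (n : ℤ) - 1) :
    coeff (R := ℚ) k (coeff (R := (PowerSeries ℚ)) n L) =
      (Nat.choose (3 * n - 1) (n + k) * Nat.choose (k - 1) (n - 1) : ℚ) / n := by
  classical
  have hk' : k ≤ 2 * n - 1 := by omega
  -- pass to the fraction field of ℚ[[w]]
  haveI : CharZero (PowerSeries ℚ) :=
    ⟨fun a b h => by simpa using congrArg (constantCoeff (R := ℚ)) h⟩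
  let K := FractionRing (PowerSeries ℚ)
  let ι : PowerSeries ℚ →+* K := algebraMap (PowerSeries ℚ) K
  have hι : Function.Injective ι := IsFractionRing.injective _ _
  haveI : CharZero K := charZero_of_injective_algebraMap hι
  set W : K := ι PowerSeries.X with hWdef
  have hWne : W ≠ 0 := by
    intro h
    exact PowerSeries.X_ne_zero (hι (by simpa using h))
  have hdmap : ∀ f, derivativeFun (PowerSeries.map ι f)
      = PowerSeries.map ι (derivativeFun f) := by
    intro f
    ext m
    change coeff m (d⁄dX K (PowerSeries.map ι f)) = coeff m (PowerSeries.map ι (d⁄dX (PowerSeries ℚ) f))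
    rw [coeff_derivativeFun, coeff_map, coeff_map, coeff_derivativeFun, map_mul, map_add,
      map_natCast, map_one]
  set Y : PowerSeries K := PowerSeries.map ι y with hYdef
  set Λ : PowerSeries K := PowerSeries.map ι L with hΛdef
  have hY0 : constantCoeff (R := K) Y = 0 := by
    rw [hYdef, ← coeff_zero_eq_constantCoeff]
    rw [coeff_map, coeff_zero_eq_constantCoeff, h0, map_zero]
  have hΦW : PowerSeries.map ι Wvar = C (R := K) W := by
    rw [show Wvar = C (R := (PowerSeries ℚ)) X from rfl, PowerSeries.map_C, hWdef]
  have hYeq : Y * (1 - C (R := K) W * Y) = X * C (R := K) W * (1 + Y)^3 := by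
    have h := congrArg (PowerSeries.map ι) hy
    simp only [map_mul, map_sub, map_add, map_one, map_pow, hΦW, PowerSeries.map_X] at h
    exact h
  have hΛ0 : (1 + Y) * derivativeFun Λ = derivativeFun Y := by
    have h := congrArg (PowerSeries.map ι) hL
    simp only [map_mul, map_add, map_one] at h
    rw [hYdef, hΛdef, hdmap, hdmap]
    exact h
  -- factor Y = X * V
  obtain ⟨V, hV⟩ : (X : PowerSeries K) ∣ Y := X_dvd_iff.mpr hY0
  have hXne : (X : PowerSeries K) ≠ 0 := X_ne_zero
  set U : PowerSeries K := 1 + Y with hU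
  set D : PowerSeries K := 1 - C (R := K) W * Y with hD
  have hVeq : V * D = C (R := K) W * U^3 := by
    apply mul_left_cancel₀ hXne
    calc X * (V * D) = Y * D := by rw [hV]; ring
      _ = X * C (R := K) W * U^3 := hYeq
      _ = X * (C (R := K) W * U^3) := by ring
  have hccV : constantCoeff (R := K) V = W := by
    have h := congrArg (constantCoeff (R := K)) hVeq
    rw [map_mul, map_mul, map_pow] at h
    have hccD : constantCoeff (R := K) D = 1 := by
      rw [hD, map_sub, map_one, map_mul, hY0, mul_zero, sub_zero]
    have hccU : constantCoeff (R := K) U = 1 := by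
      rw [hU, map_add, map_one, hY0, add_zero]
    rw [hccD, hccU, one_pow, mul_one, mul_one, constantCoeff_C] at h
    exact h
  have hccVne : constantCoeff (R := K) V ≠ 0 := by rw [hccV]; exact hWne
  have hccU : constantCoeff (R := K) U ≠ 0 := by
    rw [hU, map_add, map_one, hY0, add_zero]; exact one_ne_zero
  have hccD : constantCoeff (R := K) D ≠ 0 := by
    rw [hD, map_sub, map_one, map_mul, hY0, mul_zero, sub_zero]; exact one_ne_zero
  have hDD : D * D⁻¹ = 1 := PowerSeries.mul_inv_cancel _ hccD
  have hVV : V * V⁻¹ = 1 := PowerSeries.mul_inv_cancel _ hccVne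
  -- the inverse of U
  have hUinv : (C (R := K) W)^n * U^(3*n-1) * (D⁻¹)^n * (V⁻¹)^n = U⁻¹ := by
    rw [PowerSeries.eq_inv_iff_mul_eq_one hccU]
    have h31 : U^(3*n-1) * U = (U^3)^n := by
      rw [← pow_succ, ← pow_mul]
      congr 1
      omega
    have e : (C (R := K) W * U^3) * (D⁻¹ * V⁻¹) = (V*V⁻¹)*(D*D⁻¹) := by
      rw [← hVeq]; ring
    calc (C (R := K) W)^n * U^(3*n-1) * (D⁻¹)^n * (V⁻¹)^n * U
        = ((C (R := K) W * U^3) * (D⁻¹ * V⁻¹))^n := by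
          rw [mul_pow (C (R := K) W * U^3) (D⁻¹ * V⁻¹), mul_pow (C (R := K) W) (U^3),
            mul_pow D⁻¹ V⁻¹, ← h31]
          ring
      _ = 1 := by rw [e, hVV, hDD, one_mul, one_pow]
  -- derivative of Λ
  have hΛ' : derivativeFun Λ = derivativeFun Y * U⁻¹ := by
    have h1 : derivativeFun Λ = U⁻¹ * (U * derivativeFun Λ) := by
      rw [← mul_assoc, PowerSeries.inv_mul_cancel _ hccU, one_mul]
    rw [h1, hΛ0]
    ring
  -- the polynomial identity, specialized at C (R := K) W * Y
  obtain ⟨g, hg⟩ := poly_aux n hn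
  have hgK := congrArg (Polynomial.aeval (C (R := K) W * Y) : Polynomial ℤ →ₐ[ℤ] PowerSeries K) hg
  simp only [map_mul, map_sub, map_add, map_one, map_pow, map_sum, map_natCast,
    Polynomial.aeval_X] at hgK
  set G : PowerSeries K := Polynomial.aeval (C (R := K) W * Y) g with hGdef
  -- hgK : (1 - C (R := K) W * Y)^n * (∑ j ∈ range n, ↑(choose) * (C (R := K) W * Y)^j)
  --        = 1 + (C (R := K) W * Y)^n * G
  have hone : (1 : PowerSeries K)
      = D^n * (∑ j ∈ range n, (Nat.choose (n-1+j) j : PowerSeries K) * (C (R := K) W * Y)^j)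
        - (C (R := K) W * Y)^n * G := by
    rw [hD]
    linear_combination -hgK
  have hXn : Y^n * (V⁻¹)^n = X^n := by
    calc Y^n * (V⁻¹)^n = X^n * (V*V⁻¹)^n := by rw [hV, mul_pow, mul_pow]; ring
      _ = X^n := by rw [hVV, one_pow, mul_one]
  have hDiD : (D⁻¹)^n * D^n = 1 := by
    rw [← mul_pow, mul_comm D⁻¹ D, hDD, one_pow]
  have hUpow : U^(3*n-1) = ∑ m ∈ range (3*n), (Nat.choose (3*n-1) m : PowerSeries K) * Y^m := by
    rw [hU, add_comm (1 : PowerSeries K) Y, add_pow]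
    rw [show 3*n-1+1 = 3*n from by omega]
    refine sum_congr rfl fun m _ => ?_
    rw [one_pow, mul_one]
    ring
  set S' : PowerSeries K :=
    ∑ j ∈ range n, (Nat.choose (n-1+j) j : PowerSeries K) * (C (R := K) W * Y)^j with hS'
  set E : PowerSeries K :=
    -(derivativeFun Y * (C (R := K) W)^(2*n) * U^(3*n-1) * G * (D⁻¹)^n) with hE
  have hmain : derivativeFun Λ
      = (∑ m ∈ range (3*n), ∑ j ∈ range n,
          ((Nat.choose (3*n-1) m : PowerSeries K) * (Nat.choose (n-1+j) j : PowerSeries K))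
            * (C (R := K) W)^(n+j) * (Y^(m+j) * derivativeFun Y * (V⁻¹)^n))
        + X^n * E := by
    calc derivativeFun Λ
        = derivativeFun Y * ((C (R := K) W)^n * U^(3*n-1) * (D⁻¹)^n * (V⁻¹)^n) := by
          rw [hΛ', ← hUinv]
      _ = derivativeFun Y * ((C (R := K) W)^n * U^(3*n-1) * (D⁻¹)^n * (V⁻¹)^n)
            * (D^n * S' - (C (R := K) W * Y)^n * G) := by rw [← hone, mul_one]
      _ = derivativeFun Y * (C (R := K) W)^n * (U^(3*n-1) * S') * (V⁻¹)^n * ((D⁻¹)^n * D^n)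
            - derivativeFun Y * (C (R := K) W)^(2*n) * U^(3*n-1) * G * (D⁻¹)^n
              * (Y^n * (V⁻¹)^n) := by
          rw [two_mul, pow_add]
          ring
      _ = derivativeFun Y * (C (R := K) W)^n * (U^(3*n-1) * S') * (V⁻¹)^n + X^n * E := by
          rw [hDiD, hXn, mul_one, hE]
          ring
      _ = _ := by
          congr 1
          rw [hUpow, hS', sum_mul_sum]
          rw [Finset.mul_sum, Finset.sum_mul]
          refine sum_congr rfl fun m hm => ?_
          rw [Finset.mul_sum, Finset.sum_mul]
          refine sum_congr rfl fun j hj => ?_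
          rw [pow_add (C (R := K) W) n j, pow_add Y m j]
          ring
  -- take the (n-1)-st coefficient
  have hco := congrArg (coeff (R := K) (n-1)) hmain
  rw [map_add] at hco
  simp only [map_sum] at hco
  have hXterm : coeff (R := K) (n-1) (X^n * E) = 0 := by
    rw [coeff_X_pow_mul', if_neg (by omega)]
  rw [hXterm, add_zero] at hco
  have hterm : ∀ m ∈ range (3*n), ∀ j ∈ range n,
      coeff (R := K) (n-1)
        (((Nat.choose (3*n-1) m : PowerSeries K) * (Nat.choose (n-1+j) j : PowerSeries K))
          * (C (R := K) W)^(n+j) * (Y^(m+j) * derivativeFun Y * (V⁻¹)^n))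
      = if m + j = n-1
          then ((Nat.choose (3*n-1) m : K) * (Nat.choose (n-1+j) j : K) * W^(n+j)) else 0 := by
    intro m _ j _
    have hc : ((Nat.choose (3*n-1) m : PowerSeries K) * (Nat.choose (n-1+j) j : PowerSeries K))
          * (C (R := K) W)^(n+j)
        = C (R := K) ((Nat.choose (3*n-1) m : K) * (Nat.choose (n-1+j) j : K) * W^(n+j)) := by
      simp only [map_mul, map_pow, map_natCast]
      rw [map_natCast (C (R := K)), map_natCast (C (R := K))]
    have hYV : Y^(m+j) * derivativeFun Y * (V⁻¹)^n
        = (X*V)^(m+j) * derivativeFun (X*V) * (V⁻¹)^n := by rw [← hV]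
    rw [hc, coeff_C_mul, hYV, res_aux V hccVne n (m+j) hn]
    rw [mul_ite, mul_one, mul_zero]
  rw [sum_congr rfl (fun m hm => sum_congr rfl (hterm m hm))] at hco
  have hsum : (∑ m ∈ range (3*n), ∑ j ∈ range n,
      if m + j = n-1
        then ((Nat.choose (3*n-1) m : K) * (Nat.choose (n-1+j) j : K) * W^(n+j)) else 0)
      = ∑ j ∈ range n,
          ((Nat.choose (3*n-1) (n-1-j) : K) * (Nat.choose (n-1+j) j : K) * W^(n+j)) := by
    rw [Finset.sum_comm]
    refine sum_congr rfl fun j hj => ?_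
    have hj' : j < n := mem_range.mp hj
    have hcond : ∀ m ∈ range (3*n),
        (if m + j = n-1
          then ((Nat.choose (3*n-1) m : K) * (Nat.choose (n-1+j) j : K) * W^(n+j)) else 0)
        = (if m = n-1-j
          then ((Nat.choose (3*n-1) m : K) * (Nat.choose (n-1+j) j : K) * W^(n+j)) else 0) := by
      intro m _
      have h : (m + j = n-1) ↔ (m = n-1-j) := by omega
      exact if_congr h rfl rfl
    rw [sum_congr rfl hcond, sum_ite_eq' (range (3*n)) (n-1-j) _,
      if_pos (mem_range.mpr (by omega))]
  rw [hsum] at hco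
  have hlhs : coeff (R := K) (n-1) (derivativeFun Λ) = ι (coeff (R := (PowerSeries ℚ)) n L) * (n : K) := by
    change coeff (n-1) (d⁄dX K Λ) = _
    rw [coeff_derivativeFun]
    rw [← Nat.cast_add_one, show (n-1) + 1 = n from by omega]
    rw [hΛdef, coeff_map]
  rw [hlhs] at hco
  -- descend to ℚ⟦X⟧
  have hR : coeff (R := (PowerSeries ℚ)) n L * (n : PowerSeries ℚ)
      = ∑ j ∈ range n,
          ((Nat.choose (3*n-1) (n-1-j) * Nat.choose (n-1+j) j : ℕ) : PowerSeries ℚ)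
            * X^(n+j) := by
    apply hι
    rw [map_mul, map_natCast, map_sum, hco]
    refine sum_congr rfl fun j hj => ?_
    rw [map_mul, map_pow, map_natCast, ← hWdef]
    push_cast
    ring
  have hQ := congrArg (coeff (R := ℚ) k) hR
  rw [map_sum] at hQ
  have h1 : coeff (R := ℚ) k (coeff (R := (PowerSeries ℚ)) n L * (n : PowerSeries ℚ))
      = (n : ℚ) * coeff (R := ℚ) k (coeff (R := (PowerSeries ℚ)) n L) := by
    rw [mul_comm, show ((n : ℕ) : PowerSeries ℚ) = C (R := ℚ) (n : ℚ) from (map_natCast (C (R := ℚ)) n).symm,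
      coeff_C_mul]
  have h2 : ∀ j ∈ range n,
      coeff (R := ℚ) k (((Nat.choose (3*n-1) (n-1-j) * Nat.choose (n-1+j) j : ℕ) : PowerSeries ℚ)
          * X^(n+j))
      = if j = k - n
          then ((Nat.choose (3*n-1) (n-1-j) * Nat.choose (n-1+j) j : ℕ) : ℚ) else 0 := by
    intro j hj
    rw [show ((Nat.choose (3*n-1) (n-1-j) * Nat.choose (n-1+j) j : ℕ) : PowerSeries ℚ)
        = C (R := ℚ) ((Nat.choose (3*n-1) (n-1-j) * Nat.choose (n-1+j) j : ℕ) : ℚ)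
      from (map_natCast (C (R := ℚ)) _).symm, coeff_C_mul, coeff_X_pow]
    have h : (k = n + j) ↔ (j = k - n) := by omega
    rw [mul_ite, mul_one, mul_zero]
    exact if_congr h rfl rfl
  rw [sum_congr rfl h2, sum_ite_eq' (range n) (k-n) _,
    if_pos (mem_range.mpr (by omega)), h1] at hQ
  have e1 : Nat.choose (3*n-1) (n-1-(k-n)) = Nat.choose (3*n-1) (n+k) := by
    rw [show n-1-(k-n) = (3*n-1) - (n+k) from by omega, Nat.choose_symm (by omega)]
  have e2 : Nat.choose (n-1+(k-n)) (k-n) = Nat.choose (k-1) (n-1) := by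
    rw [show n-1+(k-n) = k-1 from by omega, show k-n = (k-1)-(n-1) from by omega,
      Nat.choose_symm (by omega)]
  rw [e1, e2] at hQ
  have hnne : (n : ℚ) ≠ 0 := Nat.cast_ne_zero.mpr (by omega)
  rw [eq_div_iff hnne]
  push_cast at hQ ⊢
  linear_combination hQ
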